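/- arXiv:0810.3398 — 4 statements merged into one kernel-verified Lean document; each statement's English description precedes it below -/
import Mathlib

section
/- Let $\mathcal{M}$ be the set of monotone nondecreasing, left-continuous functions $u:\mathbb{R}\to[0,1]$. Let $Q_0:\mathcal{M}\to\mathcal{M}$ satisfy: (i) if $u_k\to u$ uniformly on every bounded interval with $u_k,u\in\mathcal{M}$, then $Q_0[u_k]\to Q_0[u]$ almost everywhere; (ii) $u_1\le u_2$ implies $Q_0[u_1]\le Q_0[u_2]$; (iii) $Q_0$ commutes with all translations $T_{x_0}[u](\cdot)=u(\cdot-x_0)$. Then, if a sequence $\{u_k\}\subset\mathcal{M}$ converges to $u\in\mathcal{M}$ almost everywhere, $\lim_{k\to\infty}(Q_0[u_k])(x)=(Q_0[u])(x)$ holds for every continuous point $x$ of $Q_0[u]$. -/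
open MeasureTheory Filter Topology

/-- `MemM u` : `u` is monotone nondecreasing, left continuous, with values in `[0,1]`. -/
def MemM (u : ℝ → ℝ) : Prop :=
  Monotone u ∧ (∀ x : ℝ, Tendsto u (nhdsWithin x (Set.Iio x)) (nhds (u x))) ∧
    ∀ x : ℝ, u x ∈ Set.Icc (0:ℝ) 1



lemma dense_of_ae {S : Set ℝ} (h : ∀ᵐ x ∂volume, x ∈ S) : Dense S := by
  rw [dense_iff_inter_open]
  intro U hU hUne
  by_contra hc
  rw [Set.not_nonempty_iff_eq_empty] at hc
  have hsub : U ⊆ {x | ¬ x ∈ S} := by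
    intro y hy hyS
    exact absurd (Set.mem_inter hy hyS) (by simp [hc])
  have h0 : volume U = 0 := measure_mono_null hsub (ae_iff.1 h)
  exact absurd h0 (hU.measure_pos volume hUne).ne'

lemma grid {S : Set ℝ} (hS : Dense S) {δ : ℝ} (hδ : 0 < δ) (c d : ℝ) :
    ∃ T : Finset ℝ, (∀ s ∈ T, s ∈ S) ∧ ∀ y, c ≤ y → y ≤ d → ∃ s ∈ T, y ≤ s ∧ s < y + δ := by
  have hhalf : 0 < δ / 2 := by linarith
  have hchoice : ∀ i : ℕ, ∃ t, t ∈ S ∧ c + i * (δ/2) < t ∧ t < c + i * (δ/2) + δ/2 := by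
    intro i
    obtain ⟨t, ht⟩ := hS.inter_open_nonempty
      (Set.Ioo (c + i * (δ/2)) (c + i * (δ/2) + δ/2)) isOpen_Ioo
      ⟨c + i * (δ/2) + δ/4, by constructor <;> linarith⟩
    exact ⟨t, ht.2, ht.1.1, ht.1.2⟩
  choose t htS ht1 ht2 using hchoice
  obtain ⟨N, hN⟩ := exists_nat_ge ((d - c) / (δ/2))
  refine ⟨(Finset.range (N+1)).image t, ?_, ?_⟩
  · intro s hs
    obtain ⟨i, _, rfl⟩ := Finset.mem_image.1 hs
    exact htS i
  · intro y hcy hyd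
    have hP : ∃ i : ℕ, y ≤ c + i * (δ/2) := by
      refine ⟨N, ?_⟩
      have : d - c ≤ N * (δ/2) := by
        rw [div_le_iff₀ hhalf] at hN; linarith
      linarith
    have hPi : y ≤ c + (Nat.find hP) * (δ/2) := Nat.find_spec hP
    have hiN : Nat.find hP ≤ N := Nat.find_le (by
      have : d - c ≤ N * (δ/2) := by
        rw [div_le_iff₀ hhalf] at hN; linarith
      show y ≤ c + N * (δ/2)
      linarith)
    refine ⟨t (Nat.find hP), Finset.mem_image_of_mem t (Finset.mem_range.2 (by omega)),
      le_trans hPi (ht1 _).le, ?_⟩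
    rcases Nat.eq_zero_or_pos (Nat.find hP) with h0 | hpos
    · have h2 := ht2 (Nat.find hP)
      rw [h0] at h2 ⊢
      push_cast at h2 ⊢
      linarith
    · have hj : ¬ y ≤ c + ((Nat.find hP) - 1 : ℕ) * (δ/2) := Nat.find_min hP (by omega)
      push_neg at hj
      have h2 := ht2 (Nat.find hP)
      have hcast : (((Nat.find hP) - 1 : ℕ) : ℝ) = ((Nat.find hP : ℝ)) - 1 := by
        have : (1:ℕ) ≤ Nat.find hP := hpos
        push_cast [Nat.cast_sub this]
        ring
      rw [hcast] at hj
      nlinarith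

lemma upperBound {u : ℝ → ℝ} {uk : ℕ → ℝ → ℝ} {S : Set ℝ}
    (hu : Monotone u) (hu0 : ∀ x, 0 ≤ u x)
    (huk : ∀ k, Monotone (uk k)) (hS : Dense S)
    (hconv : ∀ s ∈ S, Tendsto (fun k => uk k s) atTop (nhds (u s)))
    {δ ε : ℝ} (hδ : 0 < δ) (hε : 0 < ε) (b : ℝ) :
    ∀ᶠ k in atTop, ∀ y ≤ b, uk k y ≤ u (y + δ) + ε := by
  set L := sInf (Set.range u) with hL
  have hbdd : BddBelow (Set.range u) := ⟨0, by rintro _ ⟨z, rfl⟩; exact hu0 z⟩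
  have hne : (Set.range u).Nonempty := ⟨u 0, ⟨0, rfl⟩⟩
  have hLle : ∀ z, L ≤ u z := fun z => csInf_le hbdd ⟨z, rfl⟩
  obtain ⟨_, ⟨z, rfl⟩, hz⟩ := (csInf_lt_iff hbdd hne).1
    (show L < L + ε/2 by linarith)
  obtain ⟨x0, hx0⟩ := hS.inter_open_nonempty (Set.Ioo (z-1) z) isOpen_Ioo
    ⟨z - 1/2, by constructor <;> linarith⟩
  obtain ⟨T, hTS, hT⟩ := grid hS hδ x0 (max b x0)
  have hev : ∀ᶠ k in atTop, ∀ s ∈ insert x0 T, |uk k s - u s| < ε/2 := by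
    rw [Filter.eventually_all_finset]
    intro s hs
    have hsS : s ∈ S := by
      rcases Finset.mem_insert.1 hs with rfl | hsT
      · exact hx0.2
      · exact hTS s hsT
    obtain ⟨N, hN⟩ := Metric.tendsto_atTop.1 (hconv s hsS) (ε/2) (by linarith)
    rw [eventually_atTop]
    exact ⟨N, fun k hk => by have := hN k hk; rwa [Real.dist_eq] at this⟩
  filter_upwards [hev] with k hk
  intro y hyb
  rcases le_or_gt y x0 with hyx0 | hx0y
  · have h1 : uk k y ≤ uk k x0 := huk k hyx0
    have h2 := hk x0 (Finset.mem_insert_self _ _)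
    have h3 : uk k x0 < u x0 + ε/2 := by
      have := abs_lt.1 h2; linarith
    have h4 : u x0 ≤ u z := hu hx0.1.2.le
    have h5 : L ≤ u (y + δ) := hLle _
    linarith
  · obtain ⟨s, hsT, hys, hsy⟩ := hT y hx0y.le (le_max_left _ _ |>.trans' hyb)
    have h1 : uk k y ≤ uk k s := huk k hys
    have h2 := hk s (Finset.mem_insert_of_mem hsT)
    have h3 : uk k s < u s + ε/2 := by
      have := abs_lt.1 h2; linarith
    have h4 : u s ≤ u (y + δ) := hu hsy.le
    linarith

lemma lowerBound {u : ℝ → ℝ} {uk : ℕ → ℝ → ℝ} {S : Set ℝ}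
    (hu : Monotone u) (hu1 : ∀ x, u x ≤ 1)
    (huk : ∀ k, Monotone (uk k)) (hS : Dense S)
    (hconv : ∀ s ∈ S, Tendsto (fun k => uk k s) atTop (nhds (u s)))
    {δ ε : ℝ} (hδ : 0 < δ) (hε : 0 < ε) (a : ℝ) :
    ∀ᶠ k in atTop, ∀ y, a ≤ y → u (y - δ) - ε ≤ uk k y := by
  set u' : ℝ → ℝ := fun x => 1 - u (-x) with hu'
  set uk' : ℕ → ℝ → ℝ := fun k x => 1 - uk k (-x) with huk'
  have hmono' : Monotone u' := fun x y hxy => by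
    simp only [hu']
    have : u (-y) ≤ u (-x) := hu (by linarith)
    linarith
  have h0' : ∀ x, 0 ≤ u' x := fun x => by
    simp only [hu']; linarith [hu1 (-x)]
  have hmonok' : ∀ k, Monotone (uk' k) := fun k x y hxy => by
    simp only [huk']
    have : uk k (-y) ≤ uk k (-x) := huk k (by linarith)
    linarith
  have hSd : Dense ((fun x : ℝ => -x) ⁻¹' S) := hS.preimage (Homeomorph.neg ℝ).isOpenMap
  have hconv' : ∀ s ∈ ((fun x : ℝ => -x) ⁻¹' S),
      Tendsto (fun k => uk' k s) atTop (nhds (u' s)) := by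
    intro s hs
    exact (hconv (-s) hs).const_sub 1
  have := upperBound hmono' h0' hmonok' hSd hconv' hδ hε (-a)
  filter_upwards [this] with k hk
  intro y hay
  have := hk (-y) (by linarith)
  simp only [hu', huk', neg_neg] at this
  have hrw : -(-y + δ) = y - δ := by ring
  rw [hrw] at this
  linarith


lemma tendsto_left_shift {u : ℝ → ℝ}
    (hu : ∀ p : ℝ, Tendsto u (nhdsWithin p (Set.Iio p)) (nhds (u p))) (c p : ℝ) :
    Tendsto (fun y => u (y - c)) (nhdsWithin p (Set.Iio p)) (nhds (u (p - c))) := by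
  have h1 : Tendsto (fun y : ℝ => y - c) (nhdsWithin p (Set.Iio p))
      (nhdsWithin (p - c) (Set.Iio (p - c))) := by
    apply tendsto_nhdsWithin_of_tendsto_nhds_of_eventually_within
    · exact ((continuous_id.sub continuous_const).tendsto p).mono_left nhdsWithin_le_nhds
    · filter_upwards [self_mem_nhdsWithin] with y hy
      exact sub_lt_sub_right hy c
  exact (hu (p - c)).comp h1

lemma memM_translate {u : ℝ → ℝ} (hu : MemM u) (c : ℝ) : MemM (fun y => u (y - c)) := by
  obtain ⟨hm, hl, hb⟩ := hu
  refine ⟨fun x y hxy => hm (by linarith), fun p => tendsto_left_shift hl c p, fun x => hb _⟩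

lemma memM_shift_add {u : ℝ → ℝ} (hu : MemM u) (δ : ℝ) : MemM (fun y => u (y + δ)) := by
  have := memM_translate hu (-δ)
  simpa [sub_neg_eq_add] using this

lemma memM_V {u : ℝ → ℝ} (hu : MemM u) {δ ε : ℝ} (hδ : 0 ≤ δ) (hε : 0 ≤ ε) (b : ℝ) :
    MemM (fun y => if b < y then 1 else min (u (y + δ) + ε) 1) := by
  obtain ⟨hm, hl, hb⟩ := hu
  refine ⟨?_, ?_, ?_⟩
  · intro y1 y2 h12
    dsimp only
    by_cases h1 : b < y1
    · rw [if_pos h1, if_pos (lt_of_lt_of_le h1 h12)]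
    · rw [if_neg h1]
      by_cases h2 : b < y2
      · rw [if_pos h2]; exact min_le_right _ _
      · rw [if_neg h2]
        exact min_le_min (by have := hm (show y1 + δ ≤ y2 + δ by linarith); linarith) le_rfl
  · intro p
    dsimp only
    by_cases hp : b < p
    · have heq : ∀ᶠ y in nhdsWithin p (Set.Iio p),
          (if b < y then (1:ℝ) else min (u (y + δ) + ε) 1) = (fun _ : ℝ => (1:ℝ)) y := by
        have : Set.Ioo b p ∈ nhdsWithin p (Set.Iio p) := by
          apply mem_nhdsWithin.2
          exact ⟨Set.Ioi b, isOpen_Ioi, hp, by intro y hy; exact ⟨hy.1, hy.2⟩⟩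
        filter_upwards [this] with y hy
        rw [if_pos hy.1]
      rw [if_pos hp]
      exact (tendsto_const_nhds).congr' (by filter_upwards [heq] with y hy; exact hy.symm)
    · have heq : ∀ᶠ y in nhdsWithin p (Set.Iio p),
          (min (u (y + δ) + ε) 1) = (if b < y then (1:ℝ) else min (u (y + δ) + ε) 1) := by
        filter_upwards [self_mem_nhdsWithin] with y (hy : y < p)
        rw [if_neg (not_lt.2 (hy.le.trans (not_lt.1 hp)))]
      rw [if_neg hp]
      have h1 : Tendsto (fun y => u (y + δ)) (nhdsWithin p (Set.Iio p)) (nhds (u (p + δ))) := by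
        have := tendsto_left_shift hl (-δ) p
        simpa [sub_neg_eq_add] using this
      exact ((h1.add_const ε).min tendsto_const_nhds).congr' heq
  · intro y
    dsimp only
    by_cases h : b < y
    · rw [if_pos h]; exact ⟨zero_le_one, le_rfl⟩
    · rw [if_neg h]
      exact ⟨le_min (by have := (hb (y+δ)).1; linarith) zero_le_one, min_le_right _ _⟩

lemma memM_W {u : ℝ → ℝ} (hu : MemM u) {δ ε : ℝ} (hδ : 0 ≤ δ) (hε : 0 ≤ ε) (a : ℝ) :
    MemM (fun y => if y ≤ a then 0 else max (u (y - δ) - ε) 0) := by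
  obtain ⟨hm, hl, hb⟩ := hu
  refine ⟨?_, ?_, ?_⟩
  · intro y1 y2 h12
    dsimp only
    by_cases h2 : y2 ≤ a
    · rw [if_pos h2, if_pos (le_trans h12 h2)]
    · rw [if_neg h2]
      by_cases h1 : y1 ≤ a
      · rw [if_pos h1]; exact le_max_right _ _
      · rw [if_neg h1]
        exact max_le_max (by have := hm (show y1 - δ ≤ y2 - δ by linarith); linarith) le_rfl
  · intro p
    dsimp only
    by_cases hp : p ≤ a
    · have heq : ∀ᶠ y in nhdsWithin p (Set.Iio p),
          (0:ℝ) = (if y ≤ a then (0:ℝ) else max (u (y - δ) - ε) 0) := by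
        filter_upwards [self_mem_nhdsWithin] with y hy
        rw [if_pos (le_trans hy.le hp)]
      rw [if_pos hp]
      exact (tendsto_const_nhds).congr' heq
    · have heq : ∀ᶠ y in nhdsWithin p (Set.Iio p),
          (max (u (y - δ) - ε) 0) = (if y ≤ a then (0:ℝ) else max (u (y - δ) - ε) 0) := by
        push_neg at hp
        have : Set.Ioo a p ∈ nhdsWithin p (Set.Iio p) := by
          apply mem_nhdsWithin.2
          exact ⟨Set.Ioi a, isOpen_Ioi, hp, by intro y hy; exact ⟨hy.1, hy.2⟩⟩
        filter_upwards [this] with y hy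
        rw [if_neg (not_le.2 hy.1)]
      rw [if_neg hp]
      exact (((tendsto_left_shift hl δ p).sub_const ε).max tendsto_const_nhds).congr' heq
  · intro y
    dsimp only
    by_cases h : y ≤ a
    · rw [if_pos h]; exact ⟨le_rfl, zero_le_one⟩
    · rw [if_neg h]
      exact ⟨le_max_right _ _, max_le (by have := (hb (y-δ)).2; linarith) zero_le_one⟩

theorem stmt1 (Q0 : (ℝ → ℝ) → (ℝ → ℝ))
    (hmap : ∀ u, MemM u → MemM (Q0 u))
    (hcont : ∀ (uk : ℕ → ℝ → ℝ) (u : ℝ → ℝ), (∀ k, MemM (uk k)) → MemM u →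
      (∀ a b : ℝ, TendstoUniformlyOn (fun k => uk k) u atTop (Set.Icc a b)) →
      ∀ᵐ x : ℝ ∂volume, Tendsto (fun k => Q0 (uk k) x) atTop (nhds (Q0 u x)))
    (hord : ∀ u v, MemM u → MemM v → (∀ x, u x ≤ v x) → ∀ x, Q0 u x ≤ Q0 v x)
    (htrans : ∀ (c : ℝ) (u : ℝ → ℝ), MemM u →
      ∀ x, Q0 (fun y => u (y - c)) x = Q0 u (x - c))
    (uk : ℕ → ℝ → ℝ) (u : ℝ → ℝ) (huk : ∀ k, MemM (uk k)) (hu : MemM u)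
    (hae : ∀ᵐ x : ℝ ∂volume, Tendsto (fun k => uk k x) atTop (nhds (u x)))
    (x : ℝ) (hx : ContinuousAt (Q0 u) x) :
    Tendsto (fun k => Q0 (uk k) x) atTop (nhds (Q0 u x)) := by
  have hSud : Dense {y : ℝ | Tendsto (fun k => uk k y) atTop (nhds (u y))} :=
    dense_of_ae hae
  have hconvS : ∀ s ∈ {y : ℝ | Tendsto (fun k => uk k y) atTop (nhds (u y))},
      Tendsto (fun k => uk k s) atTop (nhds (u s)) := fun s hs => hs
  have hu0 : ∀ z, 0 ≤ u z := fun z => (hu.2.2 z).1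
  have hu1 : ∀ z, u z ≤ 1 := fun z => (hu.2.2 z).2
  rw [tendsto_order]
  constructor
  · -- lower bound: ∀ c < Q0 u x, eventually c < Q0 (uk k) x
    intro c hc
    have hev : ∀ᶠ y in nhds x, c < Q0 u y := hx.eventually (eventually_gt_nhds hc)
    obtain ⟨η, hη, hball⟩ := Metric.eventually_nhds_iff.1 hev
    set δ := η / 4 with hδdef
    have hδ : 0 < δ := by positivity
    set w : ℕ → ℝ → ℝ :=
      fun n y => if y ≤ -(n:ℝ) then 0 else max (u (y - δ) - 1/((n:ℝ)+1)) 0 with hw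
    have hwm : ∀ n, MemM (w n) := fun n => memM_W hu hδ.le (by positivity) _
    have hg : MemM (fun y => u (y - δ)) := memM_translate hu δ
    have hunif : ∀ a b : ℝ, TendstoUniformlyOn (fun n => w n) (fun y => u (y - δ))
        atTop (Set.Icc a b) := by
      intro a b
      rw [Metric.tendstoUniformlyOn_iff]
      intro ε' hε'
      obtain ⟨n1, hn1⟩ := exists_nat_ge (-a)
      have h2 : ∀ᶠ n : ℕ in atTop, 1/((n:ℝ)+1) < ε' :=
        tendsto_one_div_add_atTop_nhds_zero_nat.eventually (eventually_lt_nhds hε')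
      filter_upwards [h2, eventually_ge_atTop (n1+1)] with n hn hnn
      intro y hy
      have hpos : (0:ℝ) < 1/((n:ℝ)+1) := by positivity
      have hya : ¬ y ≤ -(n:ℝ) := by
        push_neg
        have h3 : (n1:ℝ) + 1 ≤ (n:ℝ) := by exact_mod_cast hnn
        have := hy.1
        linarith
      rw [hw]; dsimp only; rw [if_neg hya, Real.dist_eq]
      have hle1 : max (u (y - δ) - 1/((n:ℝ)+1)) 0 ≤ u (y - δ) :=
        max_le (by linarith) (hu0 _)
      have hle2 : u (y - δ) - 1/((n:ℝ)+1) ≤ max (u (y - δ) - 1/((n:ℝ)+1)) 0 :=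
        le_max_left _ _
      have habs : |u (y - δ) - max (u (y - δ) - 1/((n:ℝ)+1)) 0| ≤ 1/((n:ℝ)+1) :=
        abs_le.2 ⟨by linarith, by linarith⟩
      linarith
    have hae2 := hcont w (fun y => u (y - δ)) hwm hg hunif
    obtain ⟨y0, hy0U, hy0S⟩ := (dense_of_ae hae2).inter_open_nonempty
      (Set.Ioo (x - δ) x) isOpen_Ioo ⟨x - δ/2, by constructor <;> linarith⟩
    have hQgt : c < Q0 u (y0 - δ) := by
      apply hball
      rw [Real.dist_eq, abs_lt]
      constructor
      · have := hy0U.1; linarith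
      · have := hy0U.2; linarith
    have hy0lim : Tendsto (fun n => Q0 (w n) y0) atTop (nhds (Q0 u (y0 - δ))) := by
      rw [← htrans δ u hu y0]
      exact hy0S
    obtain ⟨n0, hn0⟩ := (hy0lim.eventually (eventually_gt_nhds hQgt)).exists
    have hlow := lowerBound hu.1 hu1 (fun k => (huk k).1) hSud hconvS hδ
      (show (0:ℝ) < 1/((n0:ℝ)+1) by positivity) (-(n0:ℝ))
    filter_upwards [hlow] with k hk
    have hge : ∀ y, w n0 y ≤ uk k y := by
      intro y
      rw [hw]; dsimp only
      by_cases hy : y ≤ -(n0:ℝ)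
      · rw [if_pos hy]; exact ((huk k).2.2 y).1
      · rw [if_neg hy]
        exact max_le (hk y (not_le.1 hy).le) ((huk k).2.2 y).1
    have h1 : Q0 (w n0) x ≤ Q0 (uk k) x := hord _ _ (hwm n0) (huk k) hge x
    have h2 : Q0 (w n0) y0 ≤ Q0 (w n0) x := (hmap _ (hwm n0)).1 (le_of_lt hy0U.2)
    linarith
  · -- upper bound
    intro c hc
    have hev : ∀ᶠ y in nhds x, Q0 u y < c := hx.eventually (eventually_lt_nhds hc)
    obtain ⟨η, hη, hball⟩ := Metric.eventually_nhds_iff.1 hev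
    set δ := η / 4 with hδdef
    have hδ : 0 < δ := by positivity
    set v : ℕ → ℝ → ℝ :=
      fun n y => if (n:ℝ) < y then 1 else min (u (y + δ) + 1/((n:ℝ)+1)) 1 with hv
    have hvm : ∀ n, MemM (v n) := fun n => memM_V hu hδ.le (by positivity) _
    have hg : MemM (fun y => u (y + δ)) := memM_shift_add hu δ
    have hunif : ∀ a b : ℝ, TendstoUniformlyOn (fun n => v n) (fun y => u (y + δ))
        atTop (Set.Icc a b) := by
      intro a b
      rw [Metric.tendstoUniformlyOn_iff]
      intro ε' hε'
      obtain ⟨n1, hn1⟩ := exists_nat_ge b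
      have h2 : ∀ᶠ n : ℕ in atTop, 1/((n:ℝ)+1) < ε' :=
        tendsto_one_div_add_atTop_nhds_zero_nat.eventually (eventually_lt_nhds hε')
      filter_upwards [h2, eventually_ge_atTop n1] with n hn hnn
      intro y hy
      have hpos : (0:ℝ) < 1/((n:ℝ)+1) := by positivity
      have hya : ¬ (n:ℝ) < y := by
        push_neg
        have h3 : (n1:ℝ) ≤ (n:ℝ) := by exact_mod_cast hnn
        have := hy.2
        linarith
      rw [hv]; dsimp only; rw [if_neg hya, Real.dist_eq]
      have hle1 : u (y + δ) ≤ min (u (y + δ) + 1/((n:ℝ)+1)) 1 :=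
        le_min (by linarith) (hu1 _)
      have hle2 : min (u (y + δ) + 1/((n:ℝ)+1)) 1 ≤ u (y + δ) + 1/((n:ℝ)+1) :=
        min_le_left _ _
      have habs : |u (y + δ) - min (u (y + δ) + 1/((n:ℝ)+1)) 1| ≤ 1/((n:ℝ)+1) :=
        abs_le.2 ⟨by linarith, by linarith⟩
      linarith
    have hae2 := hcont v (fun y => u (y + δ)) hvm hg hunif
    obtain ⟨y0, hy0U, hy0S⟩ := (dense_of_ae hae2).inter_open_nonempty
      (Set.Ioo x (x + δ)) isOpen_Ioo ⟨x + δ/2, by constructor <;> linarith⟩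
    have hQlt : Q0 u (y0 + δ) < c := by
      apply hball
      rw [Real.dist_eq, abs_lt]
      constructor
      · have := hy0U.1; linarith
      · have := hy0U.2; linarith
    have htr : Q0 (fun y => u (y + δ)) y0 = Q0 u (y0 + δ) := by
      have h := htrans (-δ) u hu y0
      have hfun : (fun y => u (y - (-δ))) = fun y => u (y + δ) := by
        funext y; rw [sub_neg_eq_add]
      rw [hfun, sub_neg_eq_add] at h
      exact h
    have hy0lim : Tendsto (fun n => Q0 (v n) y0) atTop (nhds (Q0 u (y0 + δ))) := by
      rw [← htr]
      exact hy0S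
    obtain ⟨n0, hn0⟩ := (hy0lim.eventually (eventually_lt_nhds hQlt)).exists
    have hup := upperBound hu.1 hu0 (fun k => (huk k).1) hSud hconvS hδ
      (show (0:ℝ) < 1/((n0:ℝ)+1) by positivity) ((n0:ℝ))
    filter_upwards [hup] with k hk
    have hle : ∀ y, uk k y ≤ v n0 y := by
      intro y
      rw [hv]; dsimp only
      by_cases hy : (n0:ℝ) < y
      · rw [if_pos hy]; exact ((huk k).2.2 y).2
      · rw [if_neg hy]
        exact le_min (hk y (not_lt.1 hy)) ((huk k).2.2 y).2
    have h1 : Q0 (uk k) x ≤ Q0 (v n0) x := hord _ _ (huk k) (hvm n0) hle x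
    have h2 : Q0 (v n0) x ≤ Q0 (v n0) y0 := (hmap _ (hvm n0)).1 (le_of_lt hy0U.1)
    linarith
end

section
/- Let $Q_0:\mathcal{M}\to\mathcal{M}$ satisfy Hypotheses 2. Suppose $\phi\in\mathcal{M}$ and $c\in\mathbb{R}$ satisfy $(Q_0[\phi])(x-c)=\phi(x)$ for all $x$. Then the limits $\phi(-\infty)$ and $\phi(+\infty)$ are fixed points of $Q_0$ restricted to constants, i.e., $Q_0[\phi(-\infty)]=\phi(-\infty)$ and $Q_0[\phi(+\infty)]=\phi(+\infty)$; consequently each of $\phi(\pm\infty)$ belongs to $\{0,\alpha,1\}$. -/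
open MeasureTheory Filter Topology

lemma memM_shift (φ : ℝ → ℝ) (hφ : MemM φ) (c : ℝ) : MemM (fun x => φ (x - c)) := by
  refine ⟨fun a b h => hφ.1 (by linarith), fun x => ?_, fun x => hφ.2.2 _⟩
  have h1 : Tendsto (fun y : ℝ => y - c) (nhdsWithin x (Set.Iio x))
      (nhdsWithin (x - c) (Set.Iio (x - c))) := by
    apply tendsto_nhdsWithin_of_tendsto_nhds_of_eventually_within
    · exact ((continuous_id.sub continuous_const).continuousAt).mono_left nhdsWithin_le_nhds
    · filter_upwards [eventually_mem_nhdsWithin] with y hy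
      exact sub_lt_sub_right hy c
  exact (hφ.2.1 (x - c)).comp h1

lemma memM_const (γ : ℝ) (h0 : 0 ≤ γ) (h1 : γ ≤ 1) : MemM (fun _ => γ) :=
  ⟨monotone_const, fun _ => tendsto_const_nhds, fun _ => ⟨h0, h1⟩⟩

theorem stmt7 (Q0 : (ℝ → ℝ) → (ℝ → ℝ)) (α : ℝ)
    -- Hypotheses 2
    (hmap : ∀ u, MemM u → MemM (Q0 u))
    (hcont : ∀ (uk : ℕ → ℝ → ℝ) (u : ℝ → ℝ), (∀ k, MemM (uk k)) → MemM u →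
      (∀ a b : ℝ, TendstoUniformlyOn (fun k => uk k) u atTop (Set.Icc a b)) →
      ∀ᵐ x : ℝ ∂volume, Tendsto (fun k => Q0 (uk k) x) atTop (nhds (Q0 u x)))
    (hord : ∀ u v, MemM u → MemM v → (∀ x, u x ≤ v x) → ∀ x, Q0 u x ≤ Q0 v x)
    (htrans : ∀ (c : ℝ) (u : ℝ → ℝ), MemM u →
      ∀ x, Q0 (fun y => u (y - c)) x = Q0 u (x - c))
    (hα : α ∈ Set.Ioo (0:ℝ) 1)
    (hfix : ∀ x, Q0 (fun _ => α) x = α)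
    (hlow : ∀ γ : ℝ, 0 < γ → γ < α → ∀ x, Q0 (fun _ => γ) x < γ)
    (hhigh : ∀ γ : ℝ, α < γ → γ < 1 → ∀ x, γ < Q0 (fun _ => γ) x)
    -- a fixed traveling profile
    (c : ℝ) (φ : ℝ → ℝ) (hφ : MemM φ) (hfixφ : ∀ x, Q0 φ (x - c) = φ x)
    (Lm Lp : ℝ) (hLm : Tendsto φ atBot (nhds Lm)) (hLp : Tendsto φ atTop (nhds Lp)) :
    (∀ x, Q0 (fun _ => Lm) x = Lm) ∧ (∀ x, Q0 (fun _ => Lp) x = Lp) ∧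
      Lm ∈ ({0, α, 1} : Set ℝ) ∧ Lp ∈ ({0, α, 1} : Set ℝ) := by
  -- bounds on the limits
  have hφ0 : ∀ t, 0 ≤ φ t := fun t => (hφ.2.2 t).1
  have hφ1 : ∀ t, φ t ≤ 1 := fun t => (hφ.2.2 t).2
  have hLm0 : 0 ≤ Lm := ge_of_tendsto hLm (Eventually.of_forall hφ0)
  have hLm1 : Lm ≤ 1 := le_of_tendsto hLm (Eventually.of_forall hφ1)
  have hLp0 : 0 ≤ Lp := ge_of_tendsto hLp (Eventually.of_forall hφ0)
  have hLp1 : Lp ≤ 1 := le_of_tendsto hLp (Eventually.of_forall hφ1)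
  have hLmM : MemM (fun _ => Lm) := memM_const Lm hLm0 hLm1
  have hLpM : MemM (fun _ => Lp) := memM_const Lp hLp0 hLp1
  -- φ is squeezed between its limits
  have hleLp : ∀ t, φ t ≤ Lp := fun t =>
    ge_of_tendsto hLp (eventually_atTop.2 ⟨t, fun s hs => hφ.1 hs⟩)
  have hgeLm : ∀ t, Lm ≤ φ t := fun t =>
    le_of_tendsto hLm (eventually_atBot.2 ⟨t, fun s hs => hφ.1 hs⟩)
  -- Q0 of a constant function is a constant function
  have hconst : ∀ (γ : ℝ), MemM (fun _ => γ) → ∀ x y : ℝ, Q0 (fun _ => γ) x = Q0 (fun _ => γ) y := by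
    intro γ hγ x y
    have := htrans (x - y) (fun _ => γ) hγ x
    simpa using this
  -- Key: Q0 fixes the constants Lm and Lp
  have key : ∀ (L : ℝ) (uk : ℕ → ℝ),
      MemM (fun _ => L) → Tendsto uk atTop atTop →
      (∀ k, Tendsto (fun x : ℝ => φ (x + uk k)) atTop (nhds L) ∨
        Tendsto (fun x : ℝ => φ (x + uk k)) atBot (nhds L)) → True := fun _ _ _ _ _ => trivial
  -- the case of Lp
  have hQLp : ∀ x, Q0 (fun _ => Lp) x = Lp := by
    set uk : ℕ → ℝ → ℝ := fun k x => φ (x + k) with huk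
    have hukM : ∀ k, MemM (uk k) := by
      intro k
      have := memM_shift φ hφ (-(k : ℝ))
      simpa [sub_neg_eq_add] using this
    have hunif : ∀ a b : ℝ, TendstoUniformlyOn (fun k => uk k) (fun _ => Lp) atTop (Set.Icc a b) := by
      intro a b
      rw [Metric.tendstoUniformlyOn_iff]
      intro ε hε
      have : ∀ᶠ t : ℝ in atTop, Lp - φ t < ε := by
        have := (hLp.const_sub Lp).eventually (eventually_lt_nhds (by simpa using hε))
        simpa using this
      obtain ⟨T, hT⟩ := eventually_atTop.1 this
      have hN : ∀ᶠ k : ℕ in atTop, (T - a : ℝ) ≤ k :=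
        (tendsto_natCast_atTop_atTop (R := ℝ)).eventually_ge_atTop (T - a)
      filter_upwards [hN] with k hk x hx
      have h1 : T ≤ a + k := by linarith
      have h2 : φ (a + k) ≤ φ (x + k) := hφ.1 (by linarith [hx.1])
      have h3 : Lp - φ (a + k) < ε := hT _ h1
      have h4 : φ (x + k) ≤ Lp := hleLp _
      rw [Real.dist_eq, abs_of_nonneg (by linarith)]
      linarith
    have hae := hcont uk (fun _ => Lp) hukM hLpM hunif
    have hval : ∀ k x, Q0 (uk k) x = φ (x + k + c) := by
      intro k x
      have h1 : Q0 (uk k) x = Q0 φ (x + k) := by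
        have := htrans (-(k : ℝ)) φ hφ x
        simp only [sub_neg_eq_add] at this
        exact this
      have h2 : Q0 φ (x + k) = φ (x + k + c) := by
        have := hfixφ (x + k + c)
        simpa using this
      rw [h1, h2]
    have hae2 : ∀ᵐ x : ℝ ∂volume, Q0 (fun _ => Lp) x = Lp := by
      filter_upwards [hae] with x hx
      have hlim : Tendsto (fun k : ℕ => Q0 (uk k) x) atTop (nhds Lp) := by
        simp only [hval]
        have ht : Tendsto (fun k : ℕ => x + (k : ℝ) + c) atTop atTop :=
          tendsto_atTop_add_const_right _ c
            (tendsto_atTop_add_const_left _ x tendsto_natCast_atTop_atTop)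
        exact hLp.comp ht
      exact tendsto_nhds_unique hx hlim
    obtain ⟨x0, hx0⟩ := hae2.exists
    intro x
    rw [hconst Lp hLpM x x0, hx0]
  -- the case of Lm
  have hQLm : ∀ x, Q0 (fun _ => Lm) x = Lm := by
    set uk : ℕ → ℝ → ℝ := fun k x => φ (x - k) with huk
    have hukM : ∀ k, MemM (uk k) := fun k => memM_shift φ hφ (k : ℝ)
    have hunif : ∀ a b : ℝ, TendstoUniformlyOn (fun k => uk k) (fun _ => Lm) atTop (Set.Icc a b) := by
      intro a b
      rw [Metric.tendstoUniformlyOn_iff]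
      intro ε hε
      have : ∀ᶠ t : ℝ in atBot, φ t - Lm < ε := by
        have := (hLm.sub_const Lm).eventually (eventually_lt_nhds (by simpa using hε))
        simpa using this
      obtain ⟨T, hT⟩ := eventually_atBot.1 this
      have hN : ∀ᶠ k : ℕ in atTop, (b - T : ℝ) ≤ k :=
        (tendsto_natCast_atTop_atTop (R := ℝ)).eventually_ge_atTop (b - T)
      filter_upwards [hN] with k hk x hx
      have h1 : b - k ≤ T := by linarith
      have h2 : φ (x - k) ≤ φ (b - k) := hφ.1 (by linarith [hx.2])
      have h3 : φ (b - k) - Lm < ε := hT _ h1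
      have h4 : Lm ≤ φ (x - k) := hgeLm _
      rw [Real.dist_eq, abs_of_nonpos (by linarith)]
      linarith
    have hae := hcont uk (fun _ => Lm) hukM hLmM hunif
    have hval : ∀ (k : ℕ) (x : ℝ), Q0 (uk k) x = φ (x - k + c) := by
      intro k x
      have h1 : Q0 (uk k) x = Q0 φ (x - k) := htrans (k : ℝ) φ hφ x
      have h2 : Q0 φ (x - k) = φ (x - k + c) := by
        have := hfixφ (x - k + c)
        simpa using this
      rw [h1, h2]
    have hae2 : ∀ᵐ x : ℝ ∂volume, Q0 (fun _ => Lm) x = Lm := by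
      filter_upwards [hae] with x hx
      have hlim : Tendsto (fun k : ℕ => Q0 (uk k) x) atTop (nhds Lm) := by
        simp only [hval]
        have hneg : Tendsto (fun k : ℕ => -(k : ℝ)) atTop atBot :=
          tendsto_neg_atTop_atBot.comp tendsto_natCast_atTop_atTop
        have ht : Tendsto (fun k : ℕ => x - (k : ℝ) + c) atTop atBot := by
          simp only [sub_eq_add_neg]
          exact tendsto_atBot_add_const_right _ c (tendsto_atBot_add_const_left _ x hneg)
        exact hLm.comp ht
      exact tendsto_nhds_unique hx hlim
    obtain ⟨x0, hx0⟩ := hae2.exists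
    intro x
    rw [hconst Lm hLmM x x0, hx0]
  -- classification
  have classify : ∀ L : ℝ, 0 ≤ L → L ≤ 1 → (∀ x, Q0 (fun _ => L) x = L) →
      L ∈ ({0, α, 1} : Set ℝ) := by
    intro L h0 h1 hfixL
    by_contra hL
    simp only [Set.mem_insert_iff, Set.mem_singleton_iff, not_or] at hL
    obtain ⟨hL0, hLα, hL1⟩ := hL
    rcases lt_trichotomy L α with h | h | h
    · have := hlow L (lt_of_le_of_ne h0 (Ne.symm hL0)) h 0
      rw [hfixL 0] at this; exact lt_irrefl _ this
    · exact hLα h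
    · have := hhigh L h (lt_of_le_of_ne h1 hL1) 0
      rw [hfixL 0] at this; exact lt_irrefl _ this
  exact ⟨hQLm, hQLp, classify Lm hLm0 hLm1 hQLm, classify Lp hLp0 hLp1 hQLp⟩
end

section
/- Let $\mu$ be a Borel probability measure on $\mathbb{R}$ with $\mu(\{0\})\ne 1$, and let $\sigma>0$. Then $0<\inf_{\lambda_->0}\frac{\int_{\mathbb{R}}(e^{\lambda_- y}-1)\,d\mu(y)+\sigma}{\lambda_-}+\inf_{\lambda_+>0}\frac{\int_{\mathbb{R}}(e^{-\lambda_+ y}-1)\,d\mu(y)+\sigma}{\lambda_+}$, where the infima are taken in the extended reals $[-\infty,+\infty]$ and the sum is interpreted accordingly (in particular both infima are $>-\infty$). -/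
open MeasureTheory Filter Topology

/-- The quantity `(∫ (e^{s·l·y} - 1) dμ + σ) / l`, valued in the extended reals,
with value `+∞` when the integral is infinite. -/
noncomputable def quot (μ : Measure ℝ) (σ s l : ℝ) : EReal :=
  if ∫⁻ y, ENNReal.ofReal (Real.exp (s * l * y)) ∂μ = ⊤ then ⊤
  else ((((∫⁻ y, ENNReal.ofReal (Real.exp (s * l * y)) ∂μ).toReal - 1 + σ) / l : ℝ) : EReal)

lemma quot_ne_bot (μ : Measure ℝ) (σ s l : ℝ) : quot μ σ s l ≠ ⊥ := by
  unfold quot; split <;> simp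

lemma aesm_exp (μ : Measure ℝ) (c : ℝ) :
    AEStronglyMeasurable (fun y : ℝ => Real.exp (c * y)) μ :=
  (Real.continuous_exp.comp (continuous_const.mul continuous_id)).aestronglyMeasurable

lemma integrable_exp_of_ne_top {μ : Measure ℝ} {c : ℝ}
    (h : ∫⁻ y, ENNReal.ofReal (Real.exp (c * y)) ∂μ ≠ ⊤) :
    Integrable (fun y : ℝ => Real.exp (c * y)) μ :=
  ⟨aesm_exp μ c, (hasFiniteIntegral_iff_ofReal
    (Eventually.of_forall fun y => (Real.exp_pos _).le)).2 (lt_top_iff_ne_top.mpr h)⟩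

lemma toReal_lint (μ : Measure ℝ) (c : ℝ) :
    (∫⁻ y, ENNReal.ofReal (Real.exp (c * y)) ∂μ).toReal = ∫ y, Real.exp (c * y) ∂μ :=
  (integral_eq_lintegral_of_nonneg_ae
    (Eventually.of_forall fun y => (Real.exp_pos _).le) (aesm_exp μ c)).symm

lemma quot_top (μ : Measure ℝ) (σ s l : ℝ)
    (h : ∫⁻ y, ENNReal.ofReal (Real.exp (s * l * y)) ∂μ = ⊤) : quot μ σ s l = ⊤ := by
  rw [quot, if_pos h]

lemma quot_eq (μ : Measure ℝ) (σ s l : ℝ)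
    (h : ∫⁻ y, ENNReal.ofReal (Real.exp (s * l * y)) ∂μ ≠ ⊤) :
    quot μ σ s l = ((((∫ y, Real.exp (s * l * y) ∂μ) - 1 + σ) / l : ℝ) : EReal) := by
  rw [quot, if_neg h, toReal_lint μ (s * l)]

lemma one_add_add_sq_le_exp {x : ℝ} (hx : 0 ≤ x) : 1 + x + x ^ 2 / 2 ≤ Real.exp x := by
  have h := Real.sum_le_exp_of_nonneg hx 3
  norm_num [Finset.sum_range_succ, Nat.factorial] at h
  nlinarith [h]

lemma pointwise_pair {l l' : ℝ} (hl : 0 < l) (hl' : 0 < l') (y : ℝ) :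
    min l l' * y ^ 2 / 2 ≤ (Real.exp (l * y) - 1) / l + (Real.exp (-(l' * y)) - 1) / l' := by
  have hm : min l l' ≤ l := min_le_left _ _
  have hm' : min l l' ≤ l' := min_le_right _ _
  have hmnn : 0 < min l l' := lt_min hl hl'
  rcases le_total 0 y with hy | hy
  · have h1 : 1 + l * y + (l * y) ^ 2 / 2 ≤ Real.exp (l * y) :=
      one_add_add_sq_le_exp (by positivity)
    have h2 : -(l' * y) + 1 ≤ Real.exp (-(l' * y)) := Real.add_one_le_exp _
    have e1 : y + l * y ^ 2 / 2 ≤ (Real.exp (l * y) - 1) / l := by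
      rw [le_div_iff₀ hl]; nlinarith
    have e2 : -y ≤ (Real.exp (-(l' * y)) - 1) / l' := by
      rw [le_div_iff₀ hl']; nlinarith
    nlinarith [mul_le_mul_of_nonneg_right hm (sq_nonneg y)]
  · have h1 : 1 + -(l' * y) + (-(l' * y)) ^ 2 / 2 ≤ Real.exp (-(l' * y)) :=
      one_add_add_sq_le_exp (by nlinarith)
    have h2 : l * y + 1 ≤ Real.exp (l * y) := Real.add_one_le_exp _
    have e1 : -y + l' * y ^ 2 / 2 ≤ (Real.exp (-(l' * y)) - 1) / l' := by
      rw [le_div_iff₀ hl']; nlinarith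
    have e2 : y ≤ (Real.exp (l * y) - 1) / l := by
      rw [le_div_iff₀ hl]; nlinarith
    nlinarith [mul_le_mul_of_nonneg_right hm' (sq_nonneg y)]

lemma quot_lb (μ : Measure ℝ) [IsProbabilityMeasure μ] {σ : ℝ} (hσ : 0 < σ) (s : ℝ) :
    ∃ c : ℝ, ∀ l : ℝ, 0 < l → (c : EReal) ≤ quot μ σ s l := by
  have hmeas : ∀ t : ℝ, AEStronglyMeasurable (fun y : ℝ => Real.exp (t * min (s * y) 0)) μ :=
    fun t => (Real.continuous_exp.comp (continuous_const.mul
      ((continuous_const.mul continuous_id).min continuous_const))).aestronglyMeasurable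
  have hle1 : ∀ t : ℝ, 0 ≤ t → ∀ y : ℝ, Real.exp (t * min (s * y) 0) ≤ 1 := fun t ht y => by
    rw [show (1 : ℝ) = Real.exp 0 from Real.exp_zero.symm]
    exact Real.exp_le_exp.2 (mul_nonpos_of_nonneg_of_nonpos ht (min_le_right _ _))
  have hint : ∀ t : ℝ, 0 ≤ t → Integrable (fun y : ℝ => Real.exp (t * min (s * y) 0)) μ :=
    fun t ht => (integrable_const (1 : ℝ)).mono' (hmeas t) (Eventually.of_forall fun y => by
      rw [Real.norm_eq_abs, abs_of_pos (Real.exp_pos _)]; exact hle1 t ht y)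
  have htend : Tendsto (fun k : ℕ => ∫ y, Real.exp (((k : ℝ) + 1)⁻¹ * min (s * y) 0) ∂μ)
      atTop (𝓝 1) := by
    have h := tendsto_integral_of_dominated_convergence (μ := μ)
      (F := fun k : ℕ => fun y : ℝ => Real.exp (((k : ℝ) + 1)⁻¹ * min (s * y) 0))
      (f := fun _ : ℝ => (1 : ℝ)) (bound := fun _ : ℝ => (1 : ℝ))
      (fun k => hmeas _) (integrable_const 1)
      (fun k => Eventually.of_forall fun y => by
        rw [Real.norm_eq_abs, abs_of_pos (Real.exp_pos _)]
        exact hle1 _ (by positivity) y)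
      (Eventually.of_forall fun y => by
        have h0 : Tendsto (fun k : ℕ => ((k : ℝ) + 1)⁻¹ * min (s * y) 0) atTop (𝓝 0) := by
          have h1 := tendsto_one_div_add_atTop_nhds_zero_nat.mul_const (min (s * y) 0)
          simpa [one_div] using h1
        have h2 := (Real.continuous_exp.tendsto 0).comp h0
        simpa [Function.comp_def] using h2)
    simpa using h
  obtain ⟨N, hN⟩ := (Metric.tendsto_atTop.1 htend) (σ / 2) (by positivity)
  have hdist := hN N le_rfl
  rw [Real.dist_eq] at hdist
  have hEN : 1 - σ / 2 ≤ ∫ y, Real.exp (((N : ℝ) + 1)⁻¹ * min (s * y) 0) ∂μ := by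
    have := abs_lt.1 hdist; linarith [this.1]
  set l₁ : ℝ := ((N : ℝ) + 1)⁻¹ with hl₁def
  have hl₁ : 0 < l₁ := by positivity
  refine ⟨min 0 ((σ - 1) / l₁), fun l hl => ?_⟩
  by_cases htop : ∫⁻ y, ENNReal.ofReal (Real.exp (s * l * y)) ∂μ = ⊤
  · rw [quot_top μ σ s l htop]; exact le_top
  · rw [quot_eq μ σ s l htop, EReal.coe_le_coe_iff]
    have hiA : Integrable (fun y : ℝ => Real.exp (s * l * y)) μ := integrable_exp_of_ne_top htop
    set A := ∫ y, Real.exp (s * l * y) ∂μ with hA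
    rcases le_or_gt l l₁ with hll | hll
    · have h1 : ∫ y, Real.exp (l₁ * min (s * y) 0) ∂μ ≤ ∫ y, Real.exp (l * min (s * y) 0) ∂μ :=
        integral_mono (hint l₁ hl₁.le) (hint l hl.le) (fun y =>
          Real.exp_le_exp.2 (mul_le_mul_of_nonpos_right hll (min_le_right _ _)))
      have h2 : ∫ y, Real.exp (l * min (s * y) 0) ∂μ ≤ A :=
        integral_mono (hint l hl.le) hiA (fun y => Real.exp_le_exp.2 (by
          have := min_le_left (s * y) (0 : ℝ)
          nlinarith))
      have hA1 : 1 - σ / 2 ≤ A := le_trans hEN (h1.trans h2)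
      have h0 : 0 ≤ (A - 1 + σ) / l := div_nonneg (by linarith) hl.le
      exact le_trans (min_le_left _ _) h0
    · have hA0 : 0 ≤ A := integral_nonneg fun y => (Real.exp_pos _).le
      rcases le_or_gt 0 (A - 1 + σ) with hnum | hnum
      · exact le_trans (min_le_left _ _) (div_nonneg hnum hl.le)
      · have hkey : (σ - 1) / l₁ ≤ (A - 1 + σ) / l := by
          rw [div_le_div_iff₀ hl₁ hl]
          nlinarith
        exact le_trans (min_le_right _ _) hkey

lemma quot_pair (μ : Measure ℝ) [IsProbabilityMeasure μ] (hμ0 : μ ({0} : Set ℝ) ≠ 1)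
    {σ : ℝ} (hσ : 0 < σ) :
    ∃ ε : ℝ, 0 < ε ∧ ∀ l l' : ℝ, 0 < l → 0 < l' →
      (ε : EReal) ≤ quot μ σ 1 l + quot μ σ (-1) l' := by
  have hc : μ ({0}ᶜ : Set ℝ) ≠ 0 := by
    intro h
    apply hμ0
    have h2 := measure_add_measure_compl (μ := μ) (MeasurableSet.singleton (0 : ℝ))
    rw [h, add_zero, measure_univ] at h2
    exact h2
  have hUnion : ({0}ᶜ : Set ℝ) = ⋃ n : ℕ, {y : ℝ | ((n : ℝ) + 1)⁻¹ ≤ |y|} := by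
    ext y
    simp only [Set.mem_compl_iff, Set.mem_singleton_iff, Set.mem_iUnion, Set.mem_setOf_eq]
    constructor
    · intro hy
      obtain ⟨n, hn⟩ := exists_nat_gt (|y|)⁻¹
      refine ⟨n, ?_⟩
      have hy0 : 0 < |y| := abs_pos.2 hy
      rw [inv_le_comm₀ (by positivity) hy0]
      · exact le_of_lt (lt_of_lt_of_le hn (by linarith))
    · rintro ⟨n, hn⟩ h0
      rw [h0] at hn
      simp at hn
      have : (0 : ℝ) < ((n : ℝ) + 1)⁻¹ := by positivity
      linarith
  obtain ⟨n, hn⟩ : ∃ n : ℕ, μ {y : ℝ | ((n : ℝ) + 1)⁻¹ ≤ |y|} ≠ 0 := by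
    by_contra h
    push_neg at h
    exact hc (by rw [hUnion]; exact measure_iUnion_null h)
  set δ : ℝ := ((n : ℝ) + 1)⁻¹ with hδdef
  have hδ0 : 0 < δ := by positivity
  set S : Set ℝ := {y : ℝ | δ ≤ |y|} with hSdef
  have hSm : MeasurableSet S := (isClosed_le continuous_const continuous_abs).measurableSet
  set p : ℝ := (μ S).toReal with hpdef
  have hp0 : 0 < p := ENNReal.toReal_pos hn (measure_ne_top μ S)
  refine ⟨min σ (p * δ ^ 2 / 2), lt_min hσ (by positivity), fun l l' hl hl' => ?_⟩
  by_cases hP : ∫⁻ y, ENNReal.ofReal (Real.exp (1 * l * y)) ∂μ = ⊤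
  · rw [quot_top μ σ 1 l hP, EReal.top_add_of_ne_bot (quot_ne_bot _ _ _ _)]
    exact le_top
  by_cases hM : ∫⁻ y, ENNReal.ofReal (Real.exp (-1 * l' * y)) ∂μ = ⊤
  · rw [quot_top μ σ (-1) l' hM, EReal.add_top_of_ne_bot (quot_ne_bot _ _ _ _)]
    exact le_top
  rw [quot_eq μ σ 1 l hP, quot_eq μ σ (-1) l' hM, ← EReal.coe_add, EReal.coe_le_coe_iff]
  have hiA : Integrable (fun y : ℝ => Real.exp (1 * l * y)) μ := integrable_exp_of_ne_top hP
  have hiB : Integrable (fun y : ℝ => Real.exp (-1 * l' * y)) μ := integrable_exp_of_ne_top hM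
  simp only [neg_mul, one_mul] at hiA hiB ⊢
  set A := ∫ y, Real.exp (l * y) ∂μ with hA
  set B := ∫ y, Real.exp (-(l' * y)) ∂μ with hB
  set m := min l l' with hm
  have hm0 : 0 < m := lt_min hl hl'
  have hg : Integrable
      (fun y : ℝ => (Real.exp (l * y) - 1) / l + (Real.exp (-(l' * y)) - 1) / l') μ :=
    ((hiA.sub (integrable_const 1)).div_const l).add ((hiB.sub (integrable_const 1)).div_const l')
  have hind : Integrable (S.indicator (fun _ : ℝ => m * δ ^ 2 / 2)) μ :=
    (integrable_const _).indicator hSm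
  have hptb : ∀ y : ℝ, S.indicator (fun _ : ℝ => m * δ ^ 2 / 2) y ≤
      (Real.exp (l * y) - 1) / l + (Real.exp (-(l' * y)) - 1) / l' := by
    intro y
    have hpw := pointwise_pair hl hl' y
    by_cases hy : y ∈ S
    · rw [Set.indicator_of_mem hy]
      have hyS : δ ≤ |y| := hy
      have hsq : δ ^ 2 ≤ y ^ 2 := by nlinarith [abs_nonneg y, sq_abs y]
      nlinarith
    · rw [Set.indicator_of_notMem hy]
      nlinarith [sq_nonneg y]
  have hgl : Integrable (fun y : ℝ => (Real.exp (l * y) - 1) / l) μ :=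
    (hiA.sub (integrable_const 1)).div_const l
  have hgl' : Integrable (fun y : ℝ => (Real.exp (-(l' * y)) - 1) / l') μ :=
    (hiB.sub (integrable_const 1)).div_const l'
  have hIg : p * (m * δ ^ 2 / 2) ≤ (A - 1) / l + (B - 1) / l' := by
    have h1 := integral_mono hind hg hptb
    rw [integral_indicator_const _ hSm] at h1
    rw [integral_add hgl hgl', integral_div, integral_div,
      integral_sub hiA (integrable_const 1),
      integral_sub hiB (integrable_const 1), integral_const] at h1
    have hpr : μ.real S = p := rfl
    simpa [measure_univ, smul_eq_mul, hpr] using h1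
  have hσm : σ / m ≤ σ / l + σ / l' := by
    have hp1 : 0 ≤ σ / l := by positivity
    have hp2 : 0 ≤ σ / l' := by positivity
    rcases min_cases l l' with ⟨h1, _⟩ | ⟨h1, _⟩ <;> rw [hm, h1] <;> linarith
  have hsplit : (A - 1 + σ) / l + (B - 1 + σ) / l' =
      ((A - 1) / l + (B - 1) / l') + (σ / l + σ / l') := by
    rw [add_div, add_div]; ring
  rw [hsplit]
  rcases le_total m 1 with hm1 | hm1
  · have hs1 : σ ≤ σ / m := by rw [le_div_iff₀ hm0]; nlinarith
    have hnn : 0 ≤ p * (m * δ ^ 2 / 2) := by positivity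
    have := min_le_left σ (p * δ ^ 2 / 2)
    linarith
  · have hs1 : p * δ ^ 2 / 2 ≤ p * (m * δ ^ 2 / 2) := by
      nlinarith [mul_nonneg (mul_nonneg hp0.le (sq_nonneg δ)) (sub_nonneg.2 hm1)]
    have hnn : 0 ≤ σ / l + σ / l' := by positivity
    have := min_le_right σ (p * δ ^ 2 / 2)
    linarith

theorem stmt12 (μ : Measure ℝ) [IsProbabilityMeasure μ]
    (hμ0 : μ ({0} : Set ℝ) ≠ 1) (σ : ℝ) (hσ : 0 < σ) :
    (⨅ l : {l : ℝ // 0 < l}, quot μ σ 1 l) ≠ ⊥ ∧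
    (⨅ l : {l : ℝ // 0 < l}, quot μ σ (-1) l) ≠ ⊥ ∧
    (0 : EReal) < (⨅ l : {l : ℝ // 0 < l}, quot μ σ 1 l) +
      ⨅ l : {l : ℝ // 0 < l}, quot μ σ (-1) l := by
  obtain ⟨cP, hcP⟩ := quot_lb μ hσ 1
  obtain ⟨cM, hcM⟩ := quot_lb μ hσ (-1)
  obtain ⟨ε, hε0, hε⟩ := quot_pair μ hμ0 hσ
  set IP := ⨅ l : {l : ℝ // 0 < l}, quot μ σ 1 l with hIP
  set IM := ⨅ l : {l : ℝ // 0 < l}, quot μ σ (-1) l with hIM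
  have hbp : (cP : EReal) ≤ IP := le_iInf fun l => hcP l.1 l.2
  have hbm : (cM : EReal) ≤ IM := le_iInf fun l => hcM l.1 l.2
  have hnbP : IP ≠ ⊥ := fun h => by rw [h] at hbp; exact (EReal.bot_lt_coe cP).not_ge hbp
  have hnbM : IM ≠ ⊥ := fun h => by rw [h] at hbm; exact (EReal.bot_lt_coe cM).not_ge hbm
  refine ⟨hnbP, hnbM, ?_⟩
  by_contra hcon
  push_neg at hcon
  by_cases htP : IP = ⊤
  · rw [htP, EReal.top_add_of_ne_bot hnbM] at hcon
    simp at hcon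
  by_cases htM : IM = ⊤
  · rw [htM, EReal.add_top_of_ne_bot hnbP] at hcon
    simp at hcon
  set x := IP.toReal with hxdef
  set y := IM.toReal with hydef
  have hx : ((x : ℝ) : EReal) = IP := EReal.coe_toReal htP hnbP
  have hy : ((y : ℝ) : EReal) = IM := EReal.coe_toReal htM hnbM
  have hxy : x + y ≤ 0 := by
    have h1 : ((x + y : ℝ) : EReal) ≤ 0 := by rw [EReal.coe_add, hx, hy]; exact hcon
    exact EReal.coe_nonpos.1 h1
  have h1 : IP < (((x + ε / 2 : ℝ)) : EReal) := by
    rw [← hx]; exact EReal.coe_lt_coe_iff.2 (by linarith)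
  have h2 : IM < (((y + ε / 2 : ℝ)) : EReal) := by
    rw [← hy]; exact EReal.coe_lt_coe_iff.2 (by linarith)
  obtain ⟨⟨l, hl⟩, hql⟩ := iInf_lt_iff.1 h1
  obtain ⟨⟨l', hl'⟩, hql'⟩ := iInf_lt_iff.1 h2
  have hsum := hε l l' hl hl'
  have hlt : (ε : EReal) < (((x + ε / 2) + (y + ε / 2) : ℝ) : EReal) := by
    rw [EReal.coe_add]
    exact lt_of_le_of_lt hsum (EReal.add_lt_add hql hql')
  have : ε < (x + ε / 2) + (y + ε / 2) := EReal.coe_lt_coe_iff.1 hlt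
  linarith
end

section
/- Let $\mu$ be a Borel probability measure on $\mathbb{R}$, $\hat f$ a Lipschitz continuous function on $\mathbb{R}$ satisfying $\hat f>0$ on $(-\infty,0)$, $\hat f=f$ on $[0,1]$, $\hat f<0$ on $(1,\infty)$, where $f$ is the bistable nonlinearity ($f(0)=f(\alpha)=f(1)=0$, $f<0$ on $(0,\alpha)$, $f>0$ on $(\alpha,1)$, $\alpha\in(0,1)$). Let $\rho\in C^1(\mathbb{R})$ satisfy $\rho=0$ on $(-\infty,0]$, $\rho=1$ on $[1,\infty)$, $\rho'>0$ on $(0,1)$. Then for all sufficiently small $\varepsilon>0$, the function $\underline u(t,x):=\rho(\varepsilon x-\tfrac{t}{\varepsilon})-\tfrac{1-\alpha}{4}$ satisfies the subsolution inequality $\underline u_t\le\mu*\underline u-\underline u+\hat f(\underline u)$ for all $t,x\in\mathbb{R}$, and $\overline u(t,x):=\rho(\varepsilon x+\tfrac{t}{\varepsilon}+1)+\tfrac{\alpha}{4}$ satisfies the supersolution inequality $\overline u_t\ge\mu*\overline u-\overline u+\hat f(\overline u)$ for all $t,x\in\mathbb{R}$. -/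
open MeasureTheory Filter Topology

private lemma lip_abs {K : NNReal} {g : ℝ → ℝ} (h : LipschitzWith K g) (a b : ℝ) :
    |g a - g b| ≤ (K:ℝ) * |a - b| := by
  have := h.dist_le_mul a b
  rwa [Real.dist_eq, Real.dist_eq] at this

private lemma tail_small (μ : Measure ℝ) [IsProbabilityMeasure μ] {d : ℝ} (hd : 0 < d) :
    ∃ R : ℝ, 1 ≤ R ∧ (μ {y : ℝ | R < |y|}).toReal ≤ d := by
  set s : ℕ → Set ℝ := fun n => {y : ℝ | (n : ℝ) < |y|} with hs
  have hmeas : ∀ n : ℕ, NullMeasurableSet (s n) μ := fun n =>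
    ((isOpen_lt continuous_const continuous_abs).measurableSet).nullMeasurableSet
  have hanti : Antitone s := by
    intro m n hmn y hy
    simp only [hs, Set.mem_setOf_eq] at hy ⊢
    exact lt_of_le_of_lt (by exact_mod_cast hmn : (m:ℝ) ≤ (n:ℝ)) hy
  have hiInter : ⋂ n, s n = ∅ := by
    ext y
    simp only [Set.mem_iInter, Set.mem_empty_iff_false, iff_false, not_forall, hs, Set.mem_setOf_eq, not_lt]
    obtain ⟨n, hn⟩ := exists_nat_gt |y|
    exact ⟨n, hn.le⟩
  have ht : Tendsto (⇑μ ∘ s) atTop (𝓝 0) := by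
    have := MeasureTheory.tendsto_measure_iInter_atTop hmeas hanti ⟨0, measure_ne_top μ _⟩
    rwa [hiInter, measure_empty] at this
  have hev : ∀ᶠ n in atTop, (⇑μ ∘ s) n < ENNReal.ofReal d :=
    ht.eventually_lt_const (by simp [hd])
  obtain ⟨n, hn⟩ := hev.exists
  refine ⟨max n 1, le_max_right _ _, ?_⟩
  have hsub : {y : ℝ | max (n:ℝ) 1 < |y|} ⊆ s n := by
    intro y hy
    simp only [hs, Set.mem_setOf_eq] at hy ⊢
    exact lt_of_le_of_lt (le_max_left _ _) hy
  have : μ {y : ℝ | max (n:ℝ) 1 < |y|} ≤ ENNReal.ofReal d :=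
    le_trans (measure_mono hsub) hn.le
  exact ENNReal.toReal_le_of_le_ofReal hd.le this

private lemma integ_rho (μ : Measure ℝ) [IsProbabilityMeasure μ] {ρ : ℝ → ℝ}
    (hc : Continuous ρ) (h01 : ∀ w, ρ w ∈ Set.Icc (0:ℝ) 1) (a b : ℝ) :
    Integrable (fun y => ρ (a - b * y)) μ := by
  have hcont : Continuous fun y : ℝ => ρ (a - b * y) := hc.comp (by continuity)
  refine (integrable_const (1:ℝ)).mono' hcont.aestronglyMeasurable ?_
  filter_upwards with y
  have h := h01 (a - b * y)
  rw [Real.norm_eq_abs, abs_le]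
  exact ⟨by linarith [h.1], h.2⟩

private lemma int_bound (μ : Measure ℝ) [IsProbabilityMeasure μ] {ρ : ℝ → ℝ} {L : ℝ}
    (hc : Continuous ρ) (h01 : ∀ w, ρ w ∈ Set.Icc (0:ℝ) 1)
    (hL : ∀ a b, |ρ a - ρ b| ≤ L * |a - b|) (hL0 : 0 ≤ L)
    {ε R : ℝ} (hε : 0 ≤ ε) (hR : 0 ≤ R) (z : ℝ) :
    |(∫ y, ρ (z - ε * y) ∂μ) - ρ z| ≤ L * ε * R + (μ {y : ℝ | R < |y|}).toReal := by
  set s : Set ℝ := {y : ℝ | R < |y|} with hs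
  have hsm : MeasurableSet s := (isOpen_lt continuous_const continuous_abs).measurableSet
  have hint : Integrable (fun y => ρ (z - ε * y)) μ := integ_rho μ hc h01 z ε
  have hF : Integrable (fun y => ρ (z - ε * y) - ρ z) μ := hint.sub (integrable_const _)
  have hGi : Integrable (fun y => L * ε * R + s.indicator (fun _ => (1:ℝ)) y) μ :=
    (integrable_const _).add ((integrable_const 1).indicator hsm)
  have hpt : ∀ y, |ρ (z - ε * y) - ρ z| ≤ L * ε * R + s.indicator (fun _ => (1:ℝ)) y := by
    intro y
    by_cases hy : |y| ≤ R
    · have h1 : |ρ (z - ε * y) - ρ z| ≤ L * (ε * |y|) := by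
        have h2 := hL (z - ε * y) z
        have h3 : |z - ε * y - z| = ε * |y| := by
          rw [show z - ε * y - z = -(ε * y) by ring, abs_neg, abs_mul, abs_of_nonneg hε]
        rw [h3] at h2; exact h2
      have h4 : L * (ε * |y|) ≤ L * ε * R := by
        calc L * (ε * |y|) = L * ε * |y| := by ring
        _ ≤ L * ε * R := mul_le_mul_of_nonneg_left hy (mul_nonneg hL0 hε)
      have h5 : (0:ℝ) ≤ s.indicator (fun _ => (1:ℝ)) y :=
        Set.indicator_nonneg (fun _ _ => zero_le_one) y
      linarith
    · push_neg at hy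
      have hmem : y ∈ s := by simp only [hs, Set.mem_setOf_eq]; exact hy
      have h6 : s.indicator (fun _ => (1:ℝ)) y = 1 := Set.indicator_of_mem hmem _
      have h7 : |ρ (z - ε * y) - ρ z| ≤ 1 := by
        have a := h01 (z - ε * y); have b := h01 z
        rw [abs_le]; exact ⟨by linarith [a.1, b.2], by linarith [a.2, b.1]⟩
      have h8 : (0:ℝ) ≤ L * ε * R := by positivity
      linarith
  have heq : (∫ y, ρ (z - ε * y) ∂μ) - ρ z = ∫ y, (ρ (z - ε * y) - ρ z) ∂μ := by
    rw [integral_sub hint (integrable_const _), integral_const, probReal_univ, one_smul]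
  rw [heq]
  have h2 : |∫ y, (ρ (z - ε * y) - ρ z) ∂μ| ≤ ∫ y, |ρ (z - ε * y) - ρ z| ∂μ := by
    simpa [Real.norm_eq_abs] using
      norm_integral_le_integral_norm (μ := μ) (f := fun y => ρ (z - ε * y) - ρ z)
  have h3 : (∫ y, |ρ (z - ε * y) - ρ z| ∂μ) ≤
      ∫ y, (L * ε * R + s.indicator (fun _ => (1:ℝ)) y) ∂μ :=
    integral_mono hF.abs hGi hpt
  have h4 : (∫ y, (L * ε * R + s.indicator (fun _ => (1:ℝ)) y) ∂μ)
      = L * ε * R + (μ s).toReal := by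
    rw [integral_add (integrable_const _) ((integrable_const 1).indicator hsm),
      integral_const, probReal_univ, one_smul,
      integral_indicator_const _ hsm, smul_eq_mul, mul_one]
    rfl
  linarith

set_option maxHeartbeats 2000000 in
theorem stmt15 (μ : Measure ℝ) [IsProbabilityMeasure μ]
    (α : ℝ) (hα : α ∈ Set.Ioo (0:ℝ) 1)
    (f : ℝ → ℝ) (Kf : NNReal) (hf : LipschitzWith Kf f)
    (hf0 : f 0 = 0) (hfα : f α = 0) (hf1 : f 1 = 0)
    (hfneg : ∀ u ∈ Set.Ioo 0 α, f u < 0) (hfpos : ∀ u ∈ Set.Ioo α 1, 0 < f u)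
    (fh : ℝ → ℝ) (Kfh : NNReal) (hfh : LipschitzWith Kfh fh)
    (hfhpos : ∀ u < (0:ℝ), 0 < fh u) (hfheq : ∀ u ∈ Set.Icc (0:ℝ) 1, fh u = f u)
    (hfhneg : ∀ u > (1:ℝ), fh u < 0)
    (ρ ρd : ℝ → ℝ) (hρ : ∀ z, HasDerivAt ρ (ρd z) z) (hρd : Continuous ρd)
    (hρ0 : ∀ z ≤ (0:ℝ), ρ z = 0) (hρ1 : ∀ z ≥ (1:ℝ), ρ z = 1)
    (hρd' : ∀ z ∈ Set.Ioo (0:ℝ) 1, 0 < ρd z) :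
    ∃ ε₀ > 0, ∀ ε : ℝ, 0 < ε → ε < ε₀ →
      -- `u(t,x) = ρ(εx - t/ε) - (1-α)/4` is a subsolution of `u_t = μ*u - u + fh(u)`
      (∀ t x : ℝ,
        -(1/ε) * ρd (ε * x - t / ε) ≤
          (∫ y, (ρ (ε * (x - y) - t / ε) - (1 - α) / 4) ∂μ)
            - (ρ (ε * x - t / ε) - (1 - α) / 4)
            + fh (ρ (ε * x - t / ε) - (1 - α) / 4)) ∧
      -- `u(t,x) = ρ(εx + t/ε + 1) + α/4` is a supersolution
      (∀ t x : ℝ,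
        (∫ y, (ρ (ε * (x - y) + t / ε + 1) + α / 4) ∂μ)
            - (ρ (ε * x + t / ε + 1) + α / 4)
            + fh (ρ (ε * x + t / ε + 1) + α / 4) ≤
          (1/ε) * ρd (ε * x + t / ε + 1)) := by
  obtain ⟨hα0, hα1⟩ := hα
  have hdiff : Differentiable ℝ ρ := fun z => (hρ z).differentiableAt
  have hρc : Continuous ρ := hdiff.continuous
  -- ρd vanishes off (0,1)
  have hzl : ∀ w < (0:ℝ), ρd w = 0 := by
    intro w hw
    have hev : ρ =ᶠ[𝓝 w] fun _ => (0:ℝ) := by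
      filter_upwards [Iio_mem_nhds hw] with v hv
      exact hρ0 v (le_of_lt hv)
    exact (hρ w).unique ((hasDerivAt_const w (0:ℝ)).congr_of_eventuallyEq hev)
  have hzr : ∀ w > (1:ℝ), ρd w = 0 := by
    intro w hw
    have hev : ρ =ᶠ[𝓝 w] fun _ => (1:ℝ) := by
      filter_upwards [Ioi_mem_nhds hw] with v hv
      exact hρ1 v (le_of_lt hv)
    exact (hρ w).unique ((hasDerivAt_const w (1:ℝ)).congr_of_eventuallyEq hev)
  have hz0 : ρd 0 = 0 := by
    have h1 : Tendsto ρd (𝓝[<] (0:ℝ)) (𝓝 (ρd 0)) :=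
      (hρd.continuousAt.tendsto).mono_left nhdsWithin_le_nhds
    have h2 : Tendsto ρd (𝓝[<] (0:ℝ)) (𝓝 0) := by
      refine Tendsto.congr' ?_ tendsto_const_nhds
      filter_upwards [self_mem_nhdsWithin] with v hv
      exact (hzl v hv).symm
    exact tendsto_nhds_unique h1 h2
  have hz1 : ρd 1 = 0 := by
    have h1 : Tendsto ρd (𝓝[>] (1:ℝ)) (𝓝 (ρd 1)) :=
      (hρd.continuousAt.tendsto).mono_left nhdsWithin_le_nhds
    have h2 : Tendsto ρd (𝓝[>] (1:ℝ)) (𝓝 0) := by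
      refine Tendsto.congr' ?_ tendsto_const_nhds
      filter_upwards [self_mem_nhdsWithin] with v hv
      exact (hzr v hv).symm
    exact tendsto_nhds_unique h1 h2
  have hρdnn : ∀ w, 0 ≤ ρd w := by
    intro w
    rcases lt_trichotomy w 0 with h | h | h
    · rw [hzl w h]
    · rw [h, hz0]
    · rcases lt_trichotomy w 1 with h' | h' | h'
      · exact (hρd' w ⟨h, h'⟩).le
      · rw [h', hz1]
      · rw [hzr w h']
  have hmono : Monotone ρ :=
    monotone_of_deriv_nonneg hdiff (fun w => by rw [(hρ w).deriv]; exact hρdnn w)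
  have h01 : ∀ w, ρ w ∈ Set.Icc (0:ℝ) 1 := by
    intro w
    constructor
    · calc (0:ℝ) = ρ (min w 0) := (hρ0 _ (min_le_right _ _)).symm
        _ ≤ ρ w := hmono (min_le_left _ _)
    · calc ρ w ≤ ρ (max w 1) := hmono (le_max_left _ _)
        _ = 1 := hρ1 _ (le_max_right _ _)
  -- Lipschitz bound on ρ
  obtain ⟨L, hL1, hLd⟩ : ∃ L : ℝ, 1 ≤ L ∧ ∀ w, ρd w ≤ L := by
    obtain ⟨zM, _, hmaxM⟩ := isCompact_Icc.exists_isMaxOn (Set.nonempty_Icc.mpr zero_le_one)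
      (hρd.continuousOn (s := Set.Icc (0:ℝ) 1))
    refine ⟨max (ρd zM) 1, le_max_right _ _, ?_⟩
    intro w
    rcases le_or_gt w 0 with h | h
    · rcases eq_or_lt_of_le h with h' | h'
      · rw [h', hz0]
        exact le_trans zero_le_one (le_max_right _ _)
      · rw [hzl w h']
        exact le_trans zero_le_one (le_max_right _ _)
    · rcases le_or_gt w 1 with h2 | h2
      · exact le_trans (isMaxOn_iff.mp hmaxM w ⟨h.le, h2⟩) (le_max_left _ _)
      · rw [hzr w h2]
        exact le_trans zero_le_one (le_max_right _ _)
  have hL0 : (0:ℝ) ≤ L := by linarith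
  have hLip : ∀ a b, |ρ a - ρ b| ≤ L * |a - b| := by
    have hl : LipschitzWith L.toNNReal ρ := by
      refine lipschitzWith_of_nnnorm_deriv_le hdiff (fun w => ?_)
      rw [← NNReal.coe_le_coe, coe_nnnorm, (hρ w).deriv, Real.norm_eq_abs,
        Real.coe_toNNReal _ hL0, abs_of_nonneg (hρdnn w)]
      exact hLd w
    intro a b
    have := lip_abs hl a b
    rwa [Real.coe_toNNReal _ hL0] at this
  -- fh facts
  have hfh0 : fh 0 = 0 := by
    rw [hfheq 0 ⟨le_refl _, zero_le_one⟩, hf0]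
  have hfhb : ∀ u : ℝ, -1 ≤ u → u ≤ 2 → |fh u| ≤ 2 * (Kfh : ℝ) := by
    intro u h1 h2
    have h3 := lip_abs hfh u 0
    rw [hfh0, sub_zero, sub_zero] at h3
    have h4 : |u| ≤ 2 := abs_le.mpr ⟨by linarith, h2⟩
    nlinarith [Kfh.coe_nonneg]
  -- η
  obtain ⟨η, hη0, hηa, hηb⟩ : ∃ η : ℝ, 0 < η ∧ η < (1 - α)/4 ∧ η < α/4 := by
    refine ⟨min ((1 - α)/4) (α/4) / 2, ?_, ?_, ?_⟩
    · have : 0 < min ((1 - α)/4) (α/4) := lt_min (by linarith) (by linarith)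
      linarith
    · have h := min_le_left ((1 - α)/4) (α/4)
      have : 0 < min ((1 - α)/4) (α/4) := lt_min (by linarith) (by linarith)
      linarith
    · have h := min_le_right ((1 - α)/4) (α/4)
      have : 0 < min ((1 - α)/4) (α/4) := lt_min (by linarith) (by linarith)
      linarith
  -- boundary values of fh
  obtain ⟨x₁, hx₁m, hmin₁⟩ := isCompact_Icc.exists_isMinOn
    (Set.nonempty_Icc.mpr (by linarith : -((1 - α)/4) ≤ η - (1 - α)/4))
    (hfh.continuous.continuousOn (s := Set.Icc (-((1 - α)/4)) (η - (1 - α)/4)))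
  have hA : 0 < fh x₁ := hfhpos x₁ (by have := hx₁m.2; linarith)
  obtain ⟨x₂, hx₂m, hmin₂⟩ := isCompact_Icc.exists_isMinOn
    (Set.nonempty_Icc.mpr (by linarith : 1 - η - (1 - α)/4 ≤ 1 - (1 - α)/4))
    (hfh.continuous.continuousOn (s := Set.Icc (1 - η - (1 - α)/4) (1 - (1 - α)/4)))
  have hB : 0 < fh x₂ := by
    have h1 : α < x₂ := by have := hx₂m.1; linarith
    have h2 : x₂ < 1 := by have := hx₂m.2; linarith
    rw [hfheq x₂ ⟨by linarith, h2.le⟩]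
    exact hfpos x₂ ⟨h1, h2⟩
  obtain ⟨x₃, hx₃m, hmax₃⟩ := isCompact_Icc.exists_isMaxOn
    (Set.nonempty_Icc.mpr (by linarith : α/4 ≤ η + α/4))
    (hfh.continuous.continuousOn (s := Set.Icc (α/4) (η + α/4)))
  have hC : fh x₃ < 0 := by
    have h1 : 0 < x₃ := by have := hx₃m.1; linarith
    have h2 : x₃ < α := by have := hx₃m.2; linarith
    rw [hfheq x₃ ⟨h1.le, by linarith⟩]
    exact hfneg x₃ ⟨h1, h2⟩
  obtain ⟨x₄, hx₄m, hmax₄⟩ := isCompact_Icc.exists_isMaxOn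
    (Set.nonempty_Icc.mpr (by linarith : 1 - η + α/4 ≤ 1 + α/4))
    (hfh.continuous.continuousOn (s := Set.Icc (1 - η + α/4) (1 + α/4)))
  have hD : fh x₄ < 0 := hfhneg x₄ (by have := hx₄m.1; linarith)
  -- δ
  obtain ⟨δ, hδ0, hδ1, hδ2, hδ3, hδ4⟩ :
      ∃ δ : ℝ, 0 < δ ∧ δ ≤ fh x₁ ∧ δ ≤ fh x₂ ∧ δ ≤ -fh x₃ ∧ δ ≤ -fh x₄ :=
    ⟨min (min (fh x₁) (fh x₂)) (min (-fh x₃) (-fh x₄)),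
      lt_min (lt_min hA hB) (lt_min (by linarith) (by linarith)),
      le_trans (min_le_left _ _) (min_le_left _ _),
      le_trans (min_le_left _ _) (min_le_right _ _),
      le_trans (min_le_right _ _) (min_le_left _ _),
      le_trans (min_le_right _ _) (min_le_right _ _)⟩
  -- tail
  obtain ⟨R, hR1, hRtail⟩ := tail_small μ (show (0:ℝ) < δ/4 by linarith)
  have hR0 : (0:ℝ) ≤ R := by linarith
  -- κ
  have hκex : ∃ κ > 0, ∀ w, η ≤ ρ w → ρ w ≤ 1 - η → κ ≤ ρd w := by
    set K := Set.Icc (0:ℝ) 1 ∩ ρ ⁻¹' Set.Icc η (1 - η) with hKdef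
    have hKmem : ∀ w, η ≤ ρ w → ρ w ≤ 1 - η → w ∈ K := by
      intro w h1 h2
      refine ⟨⟨?_, ?_⟩, h1, h2⟩
      · by_contra h
        push_neg at h
        rw [hρ0 w h.le] at h1; linarith
      · by_contra h
        push_neg at h
        rw [hρ1 w h.le] at h2; linarith
    have hKc : IsCompact K := isCompact_Icc.inter_right (isClosed_Icc.preimage hρc)
    rcases K.eq_empty_or_nonempty with hKe | hKne
    · exact ⟨1, one_pos, fun w h1 h2 =>
        absurd (hKmem w h1 h2) (by rw [hKe]; exact Set.notMem_empty w)⟩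
    · obtain ⟨w₀, hw₀, hminw⟩ := hKc.exists_isMinOn hKne (hρd.continuousOn (s := K))
      have hw01 : w₀ ∈ Set.Ioo (0:ℝ) 1 := by
        constructor
        · by_contra h
          push_neg at h
          have := hw₀.2.1
          rw [hρ0 w₀ h] at this; linarith
        · by_contra h
          push_neg at h
          have := hw₀.2.2
          rw [hρ1 w₀ h] at this; linarith
      exact ⟨ρd w₀, hρd' w₀ hw01, fun w h1 h2 => isMinOn_iff.mp hminw w (hKmem w h1 h2)⟩
  obtain ⟨κ, hκ0, hκ⟩ := hκex
  -- ε₀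
  refine ⟨min (δ/(4*L*R)) (κ/(δ/2 + 2*(Kfh:ℝ) + 1)), ?_, ?_⟩
  · have hden : (0:ℝ) < δ/2 + 2*(Kfh:ℝ) + 1 := by nlinarith [Kfh.coe_nonneg]
    exact lt_min (by positivity) (by positivity)
  intro ε hε hεlt
  have hden : (0:ℝ) < δ/2 + 2*(Kfh:ℝ) + 1 := by nlinarith [Kfh.coe_nonneg]
  have hε1 : ε < δ/(4*L*R) := lt_of_lt_of_le hεlt (min_le_left _ _)
  have hε2 : ε < κ/(δ/2 + 2*(Kfh:ℝ) + 1) := lt_of_lt_of_le hεlt (min_le_right _ _)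
  have hεLR : L * ε * R ≤ δ/4 := by
    have hpos : (0:ℝ) < 4*L*R := by positivity
    have h1 : ε * (4*L*R) < δ := (lt_div_iff₀ hpos).mp hε1
    have h2 : L * ε * R = ε * (4*L*R) / 4 := by ring
    linarith
  have hεκ : δ/2 + 2*(Kfh:ℝ) ≤ κ/ε := by
    have h1 : ε * (δ/2 + 2*(Kfh:ℝ) + 1) < κ := by
      have := (lt_div_iff₀ hden).mp hε2
      linarith
    have h2 : δ/2 + 2*(Kfh:ℝ) + 1 ≤ κ/ε := by
      rw [le_div_iff₀ hε]
      have := mul_comm ε (δ/2 + 2*(Kfh:ℝ) + 1)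
      linarith
    linarith
  have key : ∀ z : ℝ, |(∫ y, ρ (z - ε * y) ∂μ) - ρ z| ≤ δ/2 := by
    intro z
    have h := int_bound μ hρc h01 hLip hL0 hε.le hR0 z
    linarith
  constructor
  · -- subsolution
    intro t x
    set z : ℝ := ε * x - t / ε with hzdef
    have hfun : (fun y => ρ (ε * (x - y) - t / ε) - (1 - α) / 4)
        = fun y => ρ (z - ε * y) - (1 - α) / 4 := by
      funext y
      congr 1
      rw [hzdef]; ring_nf
    have hI : (∫ y, (ρ (ε * (x - y) - t / ε) - (1 - α) / 4) ∂μ)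
        = (∫ y, ρ (z - ε * y) ∂μ) - (1 - α) / 4 := by
      rw [hfun, integral_sub (integ_rho μ hρc h01 z ε) (integrable_const _),
        integral_const, probReal_univ, one_smul]
    rw [hI]
    have hIz := key z
    obtain ⟨hIz1, hIz2⟩ := abs_le.mp hIz
    by_cases hmid : η < ρ z ∧ ρ z < 1 - η
    · have hκz : κ ≤ ρd z := hκ z hmid.1.le hmid.2.le
      have hfb := hfhb (ρ z - (1 - α)/4) (by linarith [(h01 z).1]) (by linarith [(h01 z).2])
      obtain ⟨hfb1, hfb2⟩ := abs_le.mp hfb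
      have h1 : -(1/ε) * ρd z ≤ -(1/ε) * κ := by
        have := mul_le_mul_of_nonneg_left hκz (le_of_lt (by positivity : (0:ℝ) < 1/ε))
        linarith
      have h2 : -(1/ε) * κ ≤ -(δ/2 + 2*(Kfh:ℝ)) := by
        have : δ/2 + 2*(Kfh:ℝ) ≤ (1/ε) * κ := by
          rw [one_div, inv_mul_eq_div]; exact hεκ
        linarith
      linarith
    · push_neg at hmid
      have hfδ : δ ≤ fh (ρ z - (1 - α)/4) := by
        by_cases hlow : ρ z ≤ η
        · have hu : ρ z - (1 - α)/4 ∈ Set.Icc (-((1 - α)/4)) (η - (1 - α)/4) :=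
            ⟨by linarith [(h01 z).1], by linarith⟩
          exact le_trans hδ1 (isMinOn_iff.mp hmin₁ _ hu)
        · push_neg at hlow
          have h1η : 1 - η ≤ ρ z := hmid hlow
          have hu : ρ z - (1 - α)/4 ∈ Set.Icc (1 - η - (1 - α)/4) (1 - (1 - α)/4) :=
            ⟨by linarith, by linarith [(h01 z).2]⟩
          exact le_trans hδ2 (isMinOn_iff.mp hmin₂ _ hu)
      have hlhs : -(1/ε) * ρd z ≤ 0 := by
        have h1 : (0:ℝ) ≤ (1/ε) * ρd z := mul_nonneg (by positivity) (hρdnn z)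
        linarith
      linarith
  · -- supersolution
    intro t x
    set z : ℝ := ε * x + t / ε + 1 with hzdef
    have hfun : (fun y => ρ (ε * (x - y) + t / ε + 1) + α / 4)
        = fun y => ρ (z - ε * y) + α / 4 := by
      funext y
      congr 1
      rw [hzdef]; ring_nf
    have hI : (∫ y, (ρ (ε * (x - y) + t / ε + 1) + α / 4) ∂μ)
        = (∫ y, ρ (z - ε * y) ∂μ) + α / 4 := by
      rw [hfun, integral_add (integ_rho μ hρc h01 z ε) (integrable_const _),
        integral_const, probReal_univ, one_smul]
    rw [hI]
    have hIz := key z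
    obtain ⟨hIz1, hIz2⟩ := abs_le.mp hIz
    by_cases hmid : η < ρ z ∧ ρ z < 1 - η
    · have hκz : κ ≤ ρd z := hκ z hmid.1.le hmid.2.le
      have hfb := hfhb (ρ z + α/4) (by linarith [(h01 z).1]) (by linarith [(h01 z).2])
      obtain ⟨hfb1, hfb2⟩ := abs_le.mp hfb
      have h1 : (1/ε) * κ ≤ (1/ε) * ρd z := by
        have := mul_le_mul_of_nonneg_left hκz (le_of_lt (by positivity : (0:ℝ) < 1/ε))
        linarith
      have h2 : δ/2 + 2*(Kfh:ℝ) ≤ (1/ε) * κ := by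
        rw [one_div, inv_mul_eq_div]; exact hεκ
      linarith
    · push_neg at hmid
      have hfδ : fh (ρ z + α/4) ≤ -δ := by
        by_cases hlow : ρ z ≤ η
        · have hu : ρ z + α/4 ∈ Set.Icc (α/4) (η + α/4) :=
            ⟨by linarith [(h01 z).1], by linarith⟩
          have := isMaxOn_iff.mp hmax₃ _ hu
          linarith
        · push_neg at hlow
          have h1η : 1 - η ≤ ρ z := hmid hlow
          have hu : ρ z + α/4 ∈ Set.Icc (1 - η + α/4) (1 + α/4) :=
            ⟨by linarith, by linarith [(h01 z).2]⟩
          have := isMaxOn_iff.mp hmax₄ _ hu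
          linarith
      have hrhs : (0:ℝ) ≤ (1/ε) * ρd z := mul_nonneg (by positivity) (hρdnn z)
      linarith
end
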